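/- Let F : C → D be a symmetric monoidal functor between symmetric monoidal categories with a right adjoint G. If N is a dualizable object of C, then for every object M of D there is a natural isomorphism G(M) ⊗ N ≅ G(M ⊗ F(N)). -/
import Mathlib

open CategoryTheory CategoryTheory.MonoidalCategory Functor.LaxMonoidal Functor.OplaxMonoidal

namespace ProjFormulaAux

variable {C D : Type*} [Category C] [Category D]
  [MonoidalCategory C] [MonoidalCategory D]
  (F : C ⥤ D) [F.Monoidal]

/-- A (strong) monoidal functor sends exact pairings to exact pairings. -/
def mapExactPairing (X Y : C) [ExactPairing X Y] :
    ExactPairing (F.obj X) (F.obj Y) where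
  coevaluation' := ε F ≫ F.map (η_ X Y) ≫ δ F X Y
  evaluation' := μ F Y X ≫ F.map (ε_ X Y) ≫ η F
  coevaluation_evaluation' := by
    have h1 : F.obj Y ◁ F.map (η_ X Y) =
        μ F Y (𝟙_ C) ≫ F.map (Y ◁ η_ X Y) ≫ δ F Y (X ⊗ Y) := by
      rw [← μ_natural_right_assoc, Functor.Monoidal.μ_δ, Category.comp_id]
    have h5 : ∀ {Z : D} (h : F.obj (Y ⊗ 𝟙_ C) ⟶ Z), F.obj Y ◁ ε F ≫ μ F Y (𝟙_ C) ≫ h =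
        (ρ_ (F.obj Y)).hom ≫ F.map (ρ_ Y).inv ≫ h := by
      intro Z h
      rw [← right_unitality_inv_assoc F Y, Iso.hom_inv_id_assoc]
    calc
      F.obj Y ◁ (ε F ≫ F.map (η_ X Y) ≫ δ F X Y) ≫ (α_ (F.obj Y) (F.obj X) (F.obj Y)).inv ≫
          (μ F Y X ≫ F.map (ε_ X Y) ≫ η F) ▷ F.obj Y
        = F.obj Y ◁ ε F ≫ μ F Y (𝟙_ C) ≫ F.map (Y ◁ η_ X Y) ≫
            (δ F Y (X ⊗ Y) ≫ F.obj Y ◁ δ F X Y ≫ (α_ (F.obj Y) (F.obj X) (F.obj Y)).inv) ≫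
            μ F Y X ▷ F.obj Y ≫ F.map (ε_ X Y) ▷ F.obj Y ≫ η F ▷ F.obj Y := by
          simp only [MonoidalCategory.whiskerLeft_comp, comp_whiskerRight, Category.assoc, h1]
      _ = (ρ_ (F.obj Y)).hom ≫ F.map (ρ_ Y).inv ≫ F.map (Y ◁ η_ X Y) ≫ F.map (α_ Y X Y).inv ≫
            δ F (Y ⊗ X) Y ≫ ((δ F Y X ≫ μ F Y X) ▷ F.obj Y) ≫
            F.map (ε_ X Y) ▷ F.obj Y ≫ η F ▷ F.obj Y := by
          rw [Functor.OplaxMonoidal.associativity_inv, h5]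
          simp only [Category.assoc, comp_whiskerRight]
      _ = (ρ_ (F.obj Y)).hom ≫ F.map (ρ_ Y).inv ≫ F.map (Y ◁ η_ X Y) ≫ F.map (α_ Y X Y).inv ≫
            F.map (ε_ X Y ▷ Y) ≫ δ F (𝟙_ C) Y ≫ η F ▷ F.obj Y := by
          rw [Functor.Monoidal.δ_μ, MonoidalCategory.id_whiskerRight,
            Category.id_comp, δ_natural_left_assoc]
      _ = (ρ_ (F.obj Y)).hom ≫ F.map ((ρ_ Y).inv ≫ (Y ◁ η_ X Y ≫ (α_ Y X Y).inv ≫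
            ε_ X Y ▷ Y)) ≫ δ F (𝟙_ C) Y ≫ η F ▷ F.obj Y := by
          simp only [Functor.map_comp, Category.assoc]
      _ = (ρ_ (F.obj Y)).hom ≫ F.map (λ_ Y).inv ≫ δ F (𝟙_ C) Y ≫ η F ▷ F.obj Y := by
          rw [ExactPairing.coevaluation_evaluation, Iso.inv_hom_id_assoc]
      _ = (ρ_ (F.obj Y)).hom ≫ (λ_ (F.obj Y)).inv := by
          rw [← Functor.OplaxMonoidal.left_unitality]
  evaluation_coevaluation' := by
    have h1 : F.map (η_ X Y) ▷ F.obj X =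
        μ F (𝟙_ C) X ≫ F.map (η_ X Y ▷ X) ≫ δ F (X ⊗ Y) X := by
      rw [← μ_natural_left_assoc, Functor.Monoidal.μ_δ, Category.comp_id]
    have h5 : ∀ {Z : D} (h : F.obj (𝟙_ C ⊗ X) ⟶ Z), ε F ▷ F.obj X ≫ μ F (𝟙_ C) X ≫ h =
        (λ_ (F.obj X)).hom ≫ F.map (λ_ X).inv ≫ h := by
      intro Z h
      rw [← left_unitality_inv_assoc F X, Iso.hom_inv_id_assoc]
    calc
      (ε F ≫ F.map (η_ X Y) ≫ δ F X Y) ▷ F.obj X ≫ (α_ (F.obj X) (F.obj Y) (F.obj X)).hom ≫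
          F.obj X ◁ (μ F Y X ≫ F.map (ε_ X Y) ≫ η F)
        = ε F ▷ F.obj X ≫ μ F (𝟙_ C) X ≫ F.map (η_ X Y ▷ X) ≫
            (δ F (X ⊗ Y) X ≫ δ F X Y ▷ F.obj X ≫ (α_ (F.obj X) (F.obj Y) (F.obj X)).hom) ≫
            F.obj X ◁ μ F Y X ≫ F.obj X ◁ F.map (ε_ X Y) ≫ F.obj X ◁ η F := by
          simp only [MonoidalCategory.whiskerLeft_comp, comp_whiskerRight, Category.assoc, h1]
      _ = (λ_ (F.obj X)).hom ≫ F.map (λ_ X).inv ≫ F.map (η_ X Y ▷ X) ≫ F.map (α_ X Y X).hom ≫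
            δ F X (Y ⊗ X) ≫ (F.obj X ◁ (δ F Y X ≫ μ F Y X)) ≫
            F.obj X ◁ F.map (ε_ X Y) ≫ F.obj X ◁ η F := by
          rw [Functor.OplaxMonoidal.associativity, h5]
          simp only [Category.assoc, MonoidalCategory.whiskerLeft_comp]
      _ = (λ_ (F.obj X)).hom ≫ F.map (λ_ X).inv ≫ F.map (η_ X Y ▷ X) ≫ F.map (α_ X Y X).hom ≫
            F.map (X ◁ ε_ X Y) ≫ δ F X (𝟙_ C) ≫ F.obj X ◁ η F := by
          rw [Functor.Monoidal.δ_μ,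
            MonoidalCategory.whiskerLeft_id, Category.id_comp, δ_natural_right_assoc]
      _ = (λ_ (F.obj X)).hom ≫ F.map ((λ_ X).inv ≫ (η_ X Y ▷ X ≫ (α_ X Y X).hom ≫
            X ◁ ε_ X Y)) ≫ δ F X (𝟙_ C) ≫ F.obj X ◁ η F := by
          simp only [Functor.map_comp, Category.assoc]
      _ = (λ_ (F.obj X)).hom ≫ F.map (ρ_ X).inv ≫ δ F X (𝟙_ C) ≫ F.obj X ◁ η F := by
          rw [ExactPairing.evaluation_coevaluation, Iso.inv_hom_id_assoc]
      _ = (λ_ (F.obj X)).hom ≫ (ρ_ (F.obj X)).inv := by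
          rw [← Functor.OplaxMonoidal.right_unitality]

end ProjFormulaAux

/-- Projection formula: let `F : C ⥤ D` be a symmetric monoidal functor between symmetric
monoidal categories with a right adjoint `G`.  If `N` is a dualizable object of `C`, then
there is a natural isomorphism `G(M) ⊗ N ≅ G(M ⊗ F(N))` (stated as an isomorphism of
functors in `M`). -/
theorem projection_formula_of_dualizable
    {C D : Type*} [Category C] [Category D]
    [MonoidalCategory C] [SymmetricCategory C]
    [MonoidalCategory D] [SymmetricCategory D]
    (F : C ⥤ D) [F.Braided] (G : D ⥤ C) (adj : F ⊣ G)
    (N : C) [HasRightDual N] :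
    Nonempty ((G ⋙ tensorRight N) ≅ (tensorRight (F.obj N) ⋙ G)) := by
  letI e1 : ExactPairing (Nᘁ) N := BraidedCategory.exactPairing_swap N (Nᘁ)
  letI e2 : ExactPairing (F.obj (Nᘁ)) (F.obj N) := ProjFormulaAux.mapExactPairing F (Nᘁ) N
  let A1 : (tensorRight (Nᘁ) ⋙ F) ⊣ (G ⋙ tensorRight N) :=
    (tensorRightAdjunction (Nᘁ) N).comp adj
  let A2 : (F ⋙ tensorRight (F.obj (Nᘁ))) ⊣ (tensorRight (F.obj N) ⋙ G) :=
    adj.comp (tensorRightAdjunction (F.obj (Nᘁ)) (F.obj N))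
  let i : (F ⋙ tensorRight (F.obj (Nᘁ))) ≅ (tensorRight (Nᘁ) ⋙ F) :=
    NatIso.ofComponents (fun X => Functor.Monoidal.μIso F X (Nᘁ)) (by
      intro X Y f
      exact (Functor.LaxMonoidal.μ_natural_left F f (Nᘁ)))
  exact ⟨A1.rightAdjointUniq (A2.ofNatIsoLeft i)⟩
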